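/- Let μ be a stable matching in which every person is matched (perfect), and suppose k ≥ max(O_M, O_W) and balance(μ) ≤ k, where t = k − min(O_M, O_W). Define S to be the set of men m with μ_M(m) ≠ μ_W(m) (sad men). Then |S| ≤ 2t. -/

import Mathlib

open scoped Classical

/-- A Stable Marriage instance: `acc` is the mutual acceptability relation,
`pm m w` is man `m`'s preference value for woman `w` (lower = better),
`pw w m` is woman `w`'s preference value for man `m`. -/
structure SMInst (M W : Type*) where
  acc : M → W → Prop
  pm : M → W → ℕ
  pw : W → M → ℕ

namespace SMInst

variable {M W : Type*} (I : SMInst M W)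

/-- A matching, encoded as a relation: matched pairs are acceptable and
each person appears in at most one pair. -/
def IsMatching (r : M → W → Prop) : Prop :=
  (∀ m w, r m w → I.acc m w) ∧
  (∀ m w w', r m w → r m w' → w = w') ∧
  (∀ m m' w, r m w → r m' w → m = m')

/-- `m` is matched by `r`. -/
def MMatched (r : M → W → Prop) (m : M) : Prop := ∃ w, r m w

/-- `w` is matched by `r`. -/
def WMatched (r : M → W → Prop) (w : W) : Prop := ∃ m, r m w

/-- `(m, w)` blocks `r`: the pair is acceptable, `m` is unmatched or prefers `w`
to his partner, and `w` is unmatched or prefers `m` to her partner. -/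
def Blocks (r : M → W → Prop) (m : M) (w : W) : Prop :=
  I.acc m w ∧
  (∀ w', r m w' → I.pm m w < I.pm m w') ∧
  (∀ m', r m' w → I.pw w m < I.pw w m')

/-- A stable matching: a matching with no blocking pair. -/
def IsStable (r : M → W → Prop) : Prop :=
  I.IsMatching r ∧ ∀ m w, ¬ I.Blocks r m w

/-- Sum of the men's preference values over the pairs of a matching. -/
noncomputable def sumM [Fintype M] [Fintype W] (r : M → W → Prop) : ℕ :=
  ∑ p ∈ Finset.univ.filter (fun p : M × W => r p.1 p.2), I.pm p.1 p.2

/-- Sum of the women's preference values over the pairs of a matching. -/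
noncomputable def sumW [Fintype M] [Fintype W] (r : M → W → Prop) : ℕ :=
  ∑ p ∈ Finset.univ.filter (fun p : M × W => r p.1 p.2), I.pw p.2 p.1

/-- Balance of a matching. -/
noncomputable def bal [Fintype M] [Fintype W] (r : M → W → Prop) : ℕ :=
  max (I.sumM r) (I.sumW r)

/-- Blocking pair for a perfect matching given as an equivalence `M ≃ W`. -/
def BlocksE (e : M ≃ W) (m : M) (w : W) : Prop :=
  I.acc m w ∧ I.pm m w < I.pm m (e m) ∧ I.pw w m < I.pw w (e.symm w)

/-- A stable perfect matching: all matched pairs acceptable, no blocking pair. -/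
def IsStableE (e : M ≃ W) : Prop :=
  (∀ m, I.acc m (e m)) ∧ ∀ m w, ¬ I.BlocksE e m w

/-- Sum of the men's preference values in a perfect matching. -/
def sumME [Fintype M] (e : M ≃ W) : ℕ := ∑ m, I.pm m (e m)

/-- Sum of the women's preference values in a perfect matching. -/
def sumWE [Fintype W] (e : M ≃ W) : ℕ := ∑ w, I.pw w (e.symm w)

/-- Balance of a perfect matching. -/
def balE [Fintype M] [Fintype W] (e : M ≃ W) : ℕ := max (I.sumME e) (I.sumWE e)

end SMInst

/-- If all stable matchings are perfect, k ≥ max(O_M, O_W),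
balance(μ) ≤ k and t = k − min(O_M, O_W), then the number of sad men
(men with μ_M(m) ≠ μ_W(m)) is at most 2t. -/
theorem sad_men_at_most_two_t {M W : Type*} [Fintype M] [Fintype W] (I : SMInst M W)
    (μ μM μW : M ≃ W) (k : ℕ)
    (hμ : I.IsStableE μ) (hμM : I.IsStableE μM) (hμW : I.IsStableE μW)
    (hinjm : ∀ m w w', I.acc m w → I.acc m w' → I.pm m w = I.pm m w' → w = w')
    (hinjw : ∀ w m m', I.acc m w → I.acc m' w → I.pw w m = I.pw w m' → m = m')
    (hmanOpt : ∀ e : M ≃ W, I.IsStableE e → ∀ m, I.pm m (μM m) ≤ I.pm m (e m))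
    (hwomanOpt : ∀ e : M ≃ W, I.IsStableE e → ∀ w, I.pw w (μW.symm w) ≤ I.pw w (e.symm w))
    (hk : max (I.sumME μM) (I.sumWE μW) ≤ k)
    (hbal : I.balE μ ≤ k) :
    (Finset.univ.filter fun m : M => μM m ≠ μW m).card
      ≤ 2 * (k - min (I.sumME μM) (I.sumWE μW)) := by

  classical
  set A := Finset.univ.filter (fun m : M => μ m ≠ μM m) with hAdef
  set B := Finset.univ.filter (fun w : W => μ.symm w ≠ μW.symm w) with hBdef
  -- men bound
  have h1 : ∀ m : M, I.pm m (μM m) + (if μ m ≠ μM m then 1 else 0) ≤ I.pm m (μ m) := by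
    intro m
    by_cases h : μ m = μM m
    · simp [h]
    · have hle := hmanOpt μ hμ m
      have hne : I.pm m (μM m) ≠ I.pm m (μ m) := fun he =>
        h (hinjm m _ _ (hμM.1 m) (hμ.1 m) he).symm
      simp only [h, ne_eq, not_false_eq_true, if_pos]
      omega
  have hA : A.card + I.sumME μM ≤ I.sumME μ := by
    have hs := Finset.sum_le_sum (fun m (_ : m ∈ Finset.univ) => h1 m)
    rw [Finset.sum_add_distrib] at hs
    have hcard : A.card = ∑ m : M, (if μ m ≠ μM m then 1 else 0) := by
      rw [hAdef, Finset.card_filter]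
    rw [SMInst.sumME, SMInst.sumME, hcard]
    omega
  -- women bound
  have h2 : ∀ w : W, I.pw w (μW.symm w) + (if μ.symm w ≠ μW.symm w then 1 else 0)
      ≤ I.pw w (μ.symm w) := by
    intro w
    by_cases h : μ.symm w = μW.symm w
    · simp [h]
    · have hle := hwomanOpt μ hμ w
      have hacc1 : I.acc (μ.symm w) w := by
        have := hμ.1 (μ.symm w); simpa using this
      have hacc2 : I.acc (μW.symm w) w := by
        have := hμW.1 (μW.symm w); simpa using this
      have hne : I.pw w (μW.symm w) ≠ I.pw w (μ.symm w) := fun he =>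
        h (hinjw w _ _ hacc2 hacc1 he).symm
      simp only [h, ne_eq, not_false_eq_true, if_pos]
      omega
  have hB : B.card + I.sumWE μW ≤ I.sumWE μ := by
    have hs := Finset.sum_le_sum (fun w (_ : w ∈ Finset.univ) => h2 w)
    rw [Finset.sum_add_distrib] at hs
    have hcard : B.card = ∑ w : W, (if μ.symm w ≠ μW.symm w then 1 else 0) := by
      rw [hBdef, Finset.card_filter]
    rw [SMInst.sumWE, SMInst.sumWE, hcard]
    omega
  have hMk : I.sumME μ ≤ k := le_trans (le_max_left _ _) hbal
  have hWk : I.sumWE μ ≤ k := le_trans (le_max_right _ _) hbal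
  -- split sad men
  set S2 := Finset.univ.filter (fun m : M => μ m = μM m ∧ μM m ≠ μW m) with hS2def
  have hsub : (Finset.univ.filter fun m : M => μM m ≠ μW m) ⊆ A ∪ S2 := by
    intro m hm
    simp only [Finset.mem_filter, Finset.mem_univ, true_and] at hm
    by_cases h : μ m = μM m
    · exact Finset.mem_union_right _ (by simp [hS2def, h, hm])
    · exact Finset.mem_union_left _ (by simp [hAdef, h])
  have hS2B : S2.card ≤ B.card := by
    apply Finset.card_le_card_of_injOn (fun m => μ m)
    · intro m hm
      simp only [hS2def, Finset.mem_coe, Finset.mem_filter, Finset.mem_univ, true_and] at hm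
      simp only [hBdef, Finset.mem_coe, Finset.mem_filter, Finset.mem_univ, true_and]
      intro hcon
      rw [μ.symm_apply_apply] at hcon
      exact hm.2 ((μW.eq_symm_apply.mp hcon).trans hm.1).symm
    · intro a _ b _ h
      exact μ.injective h
  have hfinal : (Finset.univ.filter fun m : M => μM m ≠ μW m).card ≤ A.card + B.card :=
    le_trans (Finset.card_le_card hsub) (le_trans (Finset.card_union_le _ _)
      (by omega))
  omega
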